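/- Let O be a complete discrete valuation ring with uniformizer λ, A = ∏_{g ∈ N} O a finite product of copies of O, T ⊆ A a local complete O-subalgebra of full O-rank, and J ⊆ T an ideal of finite index. For each g let T_g and J_g denote the images of T and J under the projection to the g-th factor, so T_g = O and J_g = λ^{m_g} O for positive integers m_g. If J is a principal ideal of T, then #(T/J) = ∏_{g ∈ N} #(T_g / J_g) = ∏_g #(O/λ^{m_g}). -/

import Mathlib

set_option maxHeartbeats 2000000

/-- In a domain, if the quotient by `(ϖ)` is finite, so is the quotient by `(ϖ^n)`. -/
lemma finite_quot_pow_aux {O : Type*} [CommRing O] [IsDomain O] (ϖ : O) (hϖ : ϖ ≠ 0)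
    [Finite (O ⧸ (Ideal.span {ϖ} : Ideal O))] (n : ℕ) :
    Finite (O ⧸ (Ideal.span {ϖ ^ n} : Ideal O)) := by
  induction n with
  | zero =>
      have : (Ideal.span {ϖ ^ 0} : Ideal O) = ⊤ := by
        simp [Ideal.span_singleton_one]
      have : Subsingleton (O ⧸ (Ideal.span {ϖ ^ 0} : Ideal O)) := by
        rw [this]
        exact Ideal.Quotient.subsingleton_iff.mpr rfl
      exact Finite.of_subsingleton
  | succ n ih =>
      set I : Ideal O := Ideal.span {ϖ ^ (n + 1)} with hI
      have hle : I ≤ Ideal.span {ϖ ^ n} :=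
        Ideal.span_singleton_le_span_singleton.mpr (pow_dvd_pow ϖ (Nat.le_succ n))
      set H : Submodule O (O ⧸ I) :=
        Submodule.map I.mkQ (Ideal.span {ϖ ^ n} : Ideal O) with hHdef
      -- `H` is finite, being a quotient of `O ⧸ (ϖ)`
      have hHfin : Finite H := by
        let f : O →ₗ[O] O ⧸ I := I.mkQ ∘ₗ LinearMap.toSpanSingleton O O (ϖ ^ n)
        have hrange : LinearMap.range f = H := by
          ext y
          constructor
          · rintro ⟨a, rfl⟩
            exact ⟨a * ϖ ^ n, Ideal.mem_span_singleton.mpr ⟨a, mul_comm _ _⟩, by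
              simp [f, LinearMap.toSpanSingleton, smul_eq_mul]⟩
          · rintro ⟨z, hz, rfl⟩
            obtain ⟨a, rfl⟩ := Ideal.mem_span_singleton'.mp hz
            exact ⟨a, by simp [f, LinearMap.toSpanSingleton, smul_eq_mul]⟩
        have hker : LinearMap.ker f = Ideal.span {ϖ} := by
          ext a
          have hfa : f a = Submodule.Quotient.mk (a * ϖ ^ n) := by
            simp [f, LinearMap.toSpanSingleton_apply, smul_eq_mul]
          have : f a = 0 ↔ a * ϖ ^ n ∈ I := by
            rw [hfa, Submodule.Quotient.mk_eq_zero]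
          rw [LinearMap.mem_ker, this, hI, Ideal.mem_span_singleton,
            Ideal.mem_span_singleton]
          constructor
          · rintro ⟨c, hc⟩
            refine ⟨c, ?_⟩
            have hpow : ϖ ^ n ≠ 0 := pow_ne_zero _ hϖ
            have : a * ϖ ^ n = (ϖ * c) * ϖ ^ n := by
              rw [hc]; ring
            exact mul_right_cancel₀ hpow this
          · rintro ⟨c, rfl⟩
            exact ⟨c, by ring⟩
        have e2 : (O ⧸ (Ideal.span {ϖ} : Ideal O)) ≃ₗ[O] H :=
          ((Submodule.quotEquivOfEq _ _ hker.symm).trans f.quotKerEquivRange).trans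
            (LinearEquiv.ofEq _ _ hrange)
        exact Finite.of_equiv _ e2.toEquiv
      -- the quotient `(O ⧸ I) ⧸ H` is finite, being `O ⧸ (ϖ^n)`
      have hQfin : Finite ((O ⧸ I) ⧸ H) := by
        have e1 : ((O ⧸ I) ⧸ H) ≃ₗ[O] O ⧸ (Ideal.span {ϖ ^ n} : Ideal O) :=
          Submodule.quotientQuotientEquivQuotient I _ hle
        exact Finite.of_equiv _ e1.symm.toEquiv
      -- conclude
      have hQfin' : Finite ((O ⧸ I) ⧸ H.toAddSubgroup) := hQfin
      have hHfin' : Finite H.toAddSubgroup := hHfin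
      exact Finite.of_equiv _
        (AddSubgroup.addGroupEquivQuotientProdAddSubgroup (s := H.toAddSubgroup)).symm

/-- Let `O` be a complete DVR with uniformizer `ϖ` and finite residue field,
`T ⊆ ∏_{g ∈ ι} O` a local complete `O`-subalgebra of full `O`-rank, and `J ⊆ T` an
ideal of finite index whose image under the `g`-th projection is `ϖ^{m g} O` (and the
image of `T` is all of `O`).  If `J` is principal, then
`#(T/J) = ∏_g #(O/ϖ^{m g})`. -/
theorem stmt7 (O : Type*) [CommRing O] [IsDomain O] [IsDiscreteValuationRing O]
    [IsAdicComplete (IsLocalRing.maximalIdeal O) O]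
    (ϖ : O) (hϖ : Irreducible ϖ) [Finite (O ⧸ Ideal.span {ϖ})]
    (ι : Type*) [Fintype ι] [Nonempty ι]
    (T : Subalgebra O (ι → O)) [IsLocalRing T]
    (hfull : ∀ x : ι → O, ∃ n : ℕ, ϖ ^ n • x ∈ T)
    (J : Ideal T) (hfin : Finite (T ⧸ J))
    (m : ι → ℕ) (hm : ∀ g, 0 < m g)
    (hTg : ∀ g : ι, Function.Surjective ((Pi.evalRingHom (fun _ : ι => O) g).comp T.val.toRingHom))
    (hJg : ∀ g : ι,
      Ideal.map ((Pi.evalRingHom (fun _ : ι => O) g).comp T.val.toRingHom) J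
        = Ideal.span {ϖ ^ m g})
    (hprinc : ∃ t : T, J = Ideal.span {t}) :
    Nat.card (T ⧸ J) = ∏ g : ι, Nat.card (O ⧸ Ideal.span {ϖ ^ m g}) := by
  classical
  obtain ⟨t, ht⟩ := hprinc
  set x : ι → O := (t : ι → O) with hxdef
  -- the projections of the generator generate the projected ideals
  have hx : ∀ g, (Ideal.span {x g} : Ideal O) = Ideal.span {ϖ ^ m g} := by
    intro g
    rw [← hJg g, ht, Ideal.map_span, Set.image_singleton]
    rfl
  have hx0 : ∀ g, x g ≠ 0 := by
    intro g h0
    have h1 : (ϖ : O) ^ m g ∈ (Ideal.span {x g} : Ideal O) :=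
      (hx g).symm ▸ Ideal.mem_span_singleton_self _
    rw [h0] at h1
    have h2 : (ϖ : O) ^ m g = 0 := by
      simpa [zero_dvd_iff] using Ideal.mem_span_singleton.mp h1
    exact pow_ne_zero _ hϖ.ne_zero h2
  -- multiplication by `x`
  let e : (ι → O) →+ (ι → O) := AddMonoidHom.mulLeft x
  have he : Function.Injective e := by
    intro a b hab
    funext g
    exact mul_left_cancel₀ (hx0 g) (congrFun hab g)
  let K : AddSubgroup (ι → O) := (Subalgebra.toSubmodule T).toAddSubgroup
  have hmemK : ∀ a : ι → O, a ∈ K ↔ a ∈ T := fun a => Iff.rfl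
  have hKe : K.map e ≤ K := by
    rintro _ ⟨a, ha, rfl⟩
    have : x * a ∈ T := by
      simpa using mul_mem t.2 ((hmemK a).mp ha)
    exact (hmemK _).mpr this
  -- Step 1 : `#(T/J)` is the relative index of `x·T` in `T`
  let eT : T ≃+ K :=
    { toFun := fun a => ⟨a.1, a.2⟩
      invFun := fun a => ⟨a.1, a.2⟩
      left_inv := fun a => rfl
      right_inv := fun a => rfl
      map_add' := fun _ _ => rfl }
  have hJmap : (J.toAddSubgroup).map eT.toAddMonoidHom = (K.map e).addSubgroupOf K := by
    ext u
    simp only [AddSubgroup.mem_map, AddSubgroup.mem_addSubgroupOf]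
    constructor
    · rintro ⟨a, haJ, rfl⟩
      rw [Submodule.mem_toAddSubgroup, ht] at haJ
      obtain ⟨r, rfl⟩ := Ideal.mem_span_singleton.mp haJ
      exact ⟨r.1, r.2, rfl⟩
    · rintro ⟨a, haK, hea⟩
      refine ⟨t * ⟨a, (hmemK a).mp haK⟩, ?_, ?_⟩
      · rw [Submodule.mem_toAddSubgroup, ht]
        exact Ideal.mem_span_singleton.mpr ⟨_, rfl⟩
      · exact Subtype.ext hea
  have hstep1 : Nat.card (T ⧸ J) = (K.map e).relIndex K :=
    Nat.card_congr (QuotientAddGroup.congr J.toAddSubgroup ((K.map e).addSubgroupOf K)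
      eT hJmap).toEquiv
  -- Step 2 : the index of `x·A` in `A` is the product of the local indices
  have hstep2 : (AddSubgroup.map e ⊤).index = ∏ g : ι, Nat.card (O ⧸ Ideal.span {ϖ ^ m g}) := by
    set P : Submodule O (ι → O) :=
      Submodule.pi Set.univ (fun g => (Ideal.span {x g} : Ideal O)) with hPdef
    have hP : AddSubgroup.map e ⊤ = P.toAddSubgroup := by
      ext a
      simp only [AddSubgroup.mem_map, AddSubgroup.mem_top, true_and,
        Submodule.mem_toAddSubgroup, hPdef, Submodule.mem_pi, Set.mem_univ, forall_true_left,
        Ideal.mem_span_singleton]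
      constructor
      · rintro ⟨b, rfl⟩ g
        exact ⟨b g, rfl⟩
      · intro h
        choose c hc using h
        refine ⟨c, funext fun g => ?_⟩
        exact (hc g).symm
    have h1 : (AddSubgroup.map e ⊤).index = Nat.card ((ι → O) ⧸ P) := by
      rw [hP]; rfl
    have h2 : Nat.card ((ι → O) ⧸ P) = ∏ g : ι, Nat.card (O ⧸ (Ideal.span {x g} : Ideal O)) := by
      rw [Nat.card_congr (Submodule.quotientPi _).toEquiv, Nat.card_pi]
    have h3 : ∀ g : ι, Nat.card (O ⧸ (Ideal.span {x g} : Ideal O))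
        = Nat.card (O ⧸ (Ideal.span {ϖ ^ m g} : Ideal O)) := fun g =>
      Nat.card_congr (Ideal.quotEquivOfEq (hx g)).toEquiv
    rw [h1, h2]
    exact Finset.prod_congr rfl fun g _ => h3 g
  -- Step 3 : `T` has finite index in `A`
  have hfinK : K.index ≠ 0 := by
    choose n hn using fun g : ι => hfull (Pi.single g (1 : O))
    set N : ℕ := Finset.univ.sup n with hN
    have hsingle : ∀ g : ι, ϖ ^ N • (Pi.single g (1 : O) : ι → O) ∈ T := by
      intro g
      have hle : n g ≤ N := Finset.le_sup (Finset.mem_univ g)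
      have : ϖ ^ N • (Pi.single g (1 : O) : ι → O)
          = ϖ ^ (N - n g) • (ϖ ^ n g • (Pi.single g (1 : O) : ι → O)) := by
        rw [smul_smul, ← pow_add, Nat.sub_add_cancel hle]
      rw [this]
      exact Submodule.smul_mem (Subalgebra.toSubmodule T) _ (hn g)
    set P0 : Submodule O (ι → O) :=
      Submodule.pi Set.univ (fun _ => (Ideal.span {ϖ ^ N} : Ideal O)) with hP0def
    have hP0 : P0 ≤ Subalgebra.toSubmodule T := by
      intro a ha
      have h1 : a = ∑ g, Pi.single g (a g) := (Finset.univ_sum_single a).symm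
      rw [h1]
      refine Submodule.sum_mem _ fun g _ => ?_
      obtain ⟨c, hc⟩ := Ideal.mem_span_singleton.mp (ha g (Set.mem_univ g))
      have h2 : (Pi.single g (a g) : ι → O) = c • (ϖ ^ N • (Pi.single g (1 : O) : ι → O)) := by
        rw [smul_smul]
        funext j
        by_cases hj : j = g
        · subst hj
          simp [hc, mul_comm]
        · simp [Pi.single_eq_of_ne hj]
      rw [h2]
      exact Submodule.smul_mem _ _ (hsingle g)
    have hfin0 : Finite ((ι → O) ⧸ P0) := by
      have : ∀ _g : ι, Finite (O ⧸ (Ideal.span {ϖ ^ N} : Ideal O)) :=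
        fun _ => finite_quot_pow_aux ϖ hϖ.ne_zero N
      exact Finite.of_equiv _ (Submodule.quotientPi _).symm.toEquiv
    have hsurj : Function.Surjective (Submodule.mapQ P0 (Subalgebra.toSubmodule T)
        LinearMap.id hP0) := by
      intro y
      obtain ⟨a, rfl⟩ := Submodule.Quotient.mk_surjective _ y
      exact ⟨Submodule.Quotient.mk a, by simp [Submodule.mapQ_apply]⟩
    have hfinq : Finite ((ι → O) ⧸ (Subalgebra.toSubmodule T)) :=
      Finite.of_surjective _ hsurj
    have : Finite ((ι → O) ⧸ K) := hfinq
    exact AddSubgroup.index_ne_zero_of_finite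
  -- combine everything
  have h1 := AddSubgroup.relIndex_mul_index hKe
  have h2 := AddSubgroup.relIndex_mul_index
    (AddSubgroup.map_mono (le_top : K ≤ ⊤) : K.map e ≤ AddSubgroup.map e ⊤)
  have h3 : (K.map e).relIndex (AddSubgroup.map e ⊤) = K.index := by
    have h4 := AddSubgroup.relIndex_comap e (H := K.map e) (⊤ : AddSubgroup (ι → O))
    rw [AddSubgroup.comap_map_eq_self_of_injective he, AddSubgroup.relIndex_top_right] at h4
    exact h4.symm
  have h5 : (K.map e).relIndex K * K.index = (AddSubgroup.map e ⊤).index * K.index := by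
    rw [h1, ← h2, h3, mul_comm]
  have h6 : (K.map e).relIndex K = (AddSubgroup.map e ⊤).index :=
    Nat.eq_of_mul_eq_mul_right (Nat.pos_of_ne_zero hfinK) h5
  rw [hstep1, h6, hstep2]
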